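/- arXiv:1509.04584 — 2 statements merged into one kernel-verified Lean document; each statement's English description precedes it below -/
import Mathlib

section
/- The Tits form q_λ of the staircase algebra A(3,3,3) (the 3×3 commutative grid) is non-negative on all of Z^9. -/
/- The Tits form of the staircase algebra A(3,3,3) (the 3×3 commutative grid,
4 commutativity relations) is non-negative on all integer vectors. -/

def isBox (lam : ℕ → ℕ) (p : ℕ × ℕ) : Prop :=
  1 ≤ p.1 ∧ p.1 ≤ lam p.2 ∧ 1 ≤ p.2

instance (lam : ℕ → ℕ) : DecidablePred (isBox lam) := fun p =>
  inferInstanceAs (Decidable (1 ≤ p.1 ∧ p.1 ≤ lam p.2 ∧ 1 ≤ p.2))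

def verts (lam : ℕ → ℕ) (R : ℕ) : Finset (ℕ × ℕ) :=
  (Finset.Icc 1 R ×ˢ Finset.Icc 1 R).filter (isBox lam)

/-- The Tits form of the staircase algebra with row lengths `lam` (boxes contained in
the `R × R` square): sum of squares over vertices, minus products over horizontal and
vertical arrows, plus products over the diagonals of the unit squares (one
commutativity relation per unit square). -/
def titsForm (lam : ℕ → ℕ) (R : ℕ) (v : ℕ × ℕ → ℤ) : ℤ :=
  (∑ p ∈ verts lam R, (v p) ^ 2)
  - (∑ p ∈ (verts lam R).filter (fun p => 2 ≤ p.1 ∧ isBox lam (p.1 - 1, p.2)),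
      v p * v (p.1 - 1, p.2))
  - (∑ p ∈ (verts lam R).filter (fun p => 2 ≤ p.2 ∧ isBox lam (p.1, p.2 - 1)),
      v p * v (p.1, p.2 - 1))
  + (∑ p ∈ (verts lam R).filter (fun p => 2 ≤ p.1 ∧ 2 ≤ p.2 ∧
        isBox lam (p.1 - 1, p.2) ∧ isBox lam (p.1, p.2 - 1) ∧
        isBox lam (p.1 - 1, p.2 - 1)),
      v p * v (p.1 - 1, p.2 - 1))

def lam33 : ℕ → ℕ := fun j => if j ≤ 3 then 3 else 0

theorem stmt8 : ∀ v : ℕ × ℕ → ℤ, 0 ≤ titsForm lam33 3 v := by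
  intro v
  have h1 : verts lam33 3 =
      {(1,1),(2,1),(3,1),(1,2),(2,2),(3,2),(1,3),(2,3),(3,3)} := by decide
  have h2 : (verts lam33 3).filter
      (fun p => 2 ≤ p.1 ∧ isBox lam33 (p.1 - 1, p.2)) =
      {(2,1),(3,1),(2,2),(3,2),(2,3),(3,3)} := by decide
  have h3 : (verts lam33 3).filter
      (fun p => 2 ≤ p.2 ∧ isBox lam33 (p.1, p.2 - 1)) =
      {(1,2),(2,2),(3,2),(1,3),(2,3),(3,3)} := by decide
  have h4 : (verts lam33 3).filter (fun p => 2 ≤ p.1 ∧ 2 ≤ p.2 ∧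
        isBox lam33 (p.1 - 1, p.2) ∧ isBox lam33 (p.1, p.2 - 1) ∧
        isBox lam33 (p.1 - 1, p.2 - 1)) =
      {(2,2),(3,2),(2,3),(3,3)} := by decide
  have key : 120 * titsForm lam33 3 v =
      30*(2*v (1,1) - v (2,1) - v (1,2) + v (2,2))^2
      + 10*(3*v (2,1) - 2*v (3,1) - v (1,2) - v (2,2) + 2*v (3,2))^2
      + 5*(4*v (3,1) - v (1,2) - v (2,2) - v (3,2))^2
      + 3*(5*v (1,2) - 3*v (2,2) + v (3,2) - 4*v (1,3) + 4*v (2,3))^2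
      + 3*(4*v (2,2) - 3*v (3,2) - 3*v (1,3) - 2*v (2,3) + 5*v (3,3))^2
      + 5*(3*v (3,2) - v (1,3) - 2*v (2,3) - v (3,3))^2
      + 40*(v (1,3) - v (2,3) + v (3,3))^2 := by
    rw [titsForm, h2, h3, h4, h1]
    simp (config := { decide := true }) [Finset.sum_insert]
    ring
  have hsq : 0 ≤ 30*(2*v (1,1) - v (2,1) - v (1,2) + v (2,2))^2
      + 10*(3*v (2,1) - 2*v (3,1) - v (1,2) - v (2,2) + 2*v (3,2))^2
      + 5*(4*v (3,1) - v (1,2) - v (2,2) - v (3,2))^2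
      + 3*(5*v (1,2) - 3*v (2,2) + v (3,2) - 4*v (1,3) + 4*v (2,3))^2
      + 3*(4*v (2,2) - 3*v (3,2) - 3*v (1,3) - 2*v (2,3) + 5*v (3,3))^2
      + 5*(3*v (3,2) - v (1,3) - 2*v (2,3) - v (3,3))^2
      + 40*(v (1,3) - v (2,3) + v (3,3))^2 := by positivity
  nlinarith [key, hsq]
end

section
/- The Tits form of the staircase algebra A(5,5) (the 2×5 commutative grid quiver) is non-negative on Z^{10}, and its radical contains the two vectors with rows (2,3,2,0,−1)/(1,0,−2,−3,−2) and (0,1,2,2,1)/(1,2,2,1,0). -/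
def lam55 : ℕ → ℕ := fun j => if j ≤ 2 then 5 else 0

def u1 : ℕ × ℕ → ℤ := fun p =>
  match p with
  | (1, 1) => -2 | (2, 1) => -3 | (3, 1) => -2 | (4, 1) => 0 | (5, 1) => 1
  | (1, 2) => -1 | (2, 2) => 0 | (3, 2) => 2 | (4, 2) => 3 | (5, 2) => 2
  | _ => 0

def u2 : ℕ × ℕ → ℤ := fun p =>
  match p with
  | (1, 1) => 0 | (2, 1) => 1 | (3, 1) => 2 | (4, 1) => 2 | (5, 1) => 1
  | (1, 2) => 1 | (2, 2) => 2 | (3, 2) => 2 | (4, 2) => 1 | (5, 2) => 0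
  | _ => 0


lemma titsForm_expand (v : ℕ × ℕ → ℤ) : titsForm lam55 5 v =
    (v (1,1)^2 + v (2,1)^2 + v (3,1)^2 + v (4,1)^2 + v (5,1)^2
     + v (1,2)^2 + v (2,2)^2 + v (3,2)^2 + v (4,2)^2 + v (5,2)^2)
  - (v (2,1)*v (1,1) + v (3,1)*v (2,1) + v (4,1)*v (3,1) + v (5,1)*v (4,1)
     + v (2,2)*v (1,2) + v (3,2)*v (2,2) + v (4,2)*v (3,2) + v (5,2)*v (4,2))
  - (v (1,2)*v (1,1) + v (2,2)*v (2,1) + v (3,2)*v (3,1) + v (4,2)*v (4,1) + v (5,2)*v (5,1))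
  + (v (2,2)*v (1,1) + v (3,2)*v (2,1) + v (4,2)*v (3,1) + v (5,2)*v (4,1)) := by
  have h1 : verts lam55 5 =
      ({(1,1),(2,1),(3,1),(4,1),(5,1),(1,2),(2,2),(3,2),(4,2),(5,2)} : Finset (ℕ × ℕ)) := by
    decide
  have h2 : (verts lam55 5).filter (fun p => 2 ≤ p.1 ∧ isBox lam55 (p.1 - 1, p.2)) =
      ({(2,1),(3,1),(4,1),(5,1),(2,2),(3,2),(4,2),(5,2)} : Finset (ℕ × ℕ)) := by
    decide
  have h3 : (verts lam55 5).filter (fun p => 2 ≤ p.2 ∧ isBox lam55 (p.1, p.2 - 1)) =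
      ({(1,2),(2,2),(3,2),(4,2),(5,2)} : Finset (ℕ × ℕ)) := by
    decide
  have h4 : (verts lam55 5).filter (fun p => 2 ≤ p.1 ∧ 2 ≤ p.2 ∧
        isBox lam55 (p.1 - 1, p.2) ∧ isBox lam55 (p.1, p.2 - 1) ∧
        isBox lam55 (p.1 - 1, p.2 - 1)) =
      ({(2,2),(3,2),(4,2),(5,2)} : Finset (ℕ × ℕ)) := by
    decide
  rw [titsForm, h2, h3, h4, h1]
  simp +decide [Finset.sum_insert]
  ring

theorem stmt9 :
    (∀ v : ℕ × ℕ → ℤ, 0 ≤ titsForm lam55 5 v) ∧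
    (∀ w : ℕ × ℕ → ℤ, titsForm lam55 5 (fun p => u1 p + w p) = titsForm lam55 5 w) ∧
    (∀ w : ℕ × ℕ → ℤ, titsForm lam55 5 (fun p => u2 p + w p) = titsForm lam55 5 w) := by
  refine ⟨?_, ?_, ?_⟩
  · intro v
    rw [titsForm_expand]
    set a1 := v (1,1); set a2 := v (2,1); set a3 := v (3,1); set a4 := v (4,1); set a5 := v (5,1)
    set b1 := v (1,2); set b2 := v (2,2); set b3 := v (3,2); set b4 := v (4,2); set b5 := v (5,2)
    nlinarith [sq_nonneg (2*a1 - a2 - b1 + b2),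
      sq_nonneg (3*a2 - 2*a3 - b1 - b2 + 2*b3),
      sq_nonneg (4*a3 - 3*a4 - b1 - b2 - b3 + 3*b4),
      sq_nonneg (5*a4 - 4*a5 - b1 - b2 - b3 - b4 + 4*b5),
      sq_nonneg (6*a5 - b1 - b2 - b3 - b4 - b5),
      sq_nonneg (7*b1 - 5*b2 + b3 + b4 + b5),
      sq_nonneg (4*b2 - 5*b3 + 2*b4 + 2*b5),
      sq_nonneg (b3 - 2*b4 + 2*b5)]
  · intro w
    rw [titsForm_expand, titsForm_expand]
    have hu111 : u1 (1,1) = (-2 : ℤ) := rfl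
    have hu121 : u1 (2,1) = (-3 : ℤ) := rfl
    have hu131 : u1 (3,1) = (-2 : ℤ) := rfl
    have hu141 : u1 (4,1) = (0 : ℤ) := rfl
    have hu151 : u1 (5,1) = (1 : ℤ) := rfl
    have hu112 : u1 (1,2) = (-1 : ℤ) := rfl
    have hu122 : u1 (2,2) = (0 : ℤ) := rfl
    have hu132 : u1 (3,2) = (2 : ℤ) := rfl
    have hu142 : u1 (4,2) = (3 : ℤ) := rfl
    have hu152 : u1 (5,2) = (2 : ℤ) := rfl
    simp only [hu111,hu121,hu131,hu141,hu151,hu112,hu122,hu132,hu142,hu152]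
    ring
  · intro w
    rw [titsForm_expand, titsForm_expand]
    have hu211 : u2 (1,1) = (0 : ℤ) := rfl
    have hu221 : u2 (2,1) = (1 : ℤ) := rfl
    have hu231 : u2 (3,1) = (2 : ℤ) := rfl
    have hu241 : u2 (4,1) = (2 : ℤ) := rfl
    have hu251 : u2 (5,1) = (1 : ℤ) := rfl
    have hu212 : u2 (1,2) = (1 : ℤ) := rfl
    have hu222 : u2 (2,2) = (2 : ℤ) := rfl
    have hu232 : u2 (3,2) = (2 : ℤ) := rfl
    have hu242 : u2 (4,2) = (1 : ℤ) := rfl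
    have hu252 : u2 (5,2) = (0 : ℤ) := rfl
    simp only [hu211,hu221,hu231,hu241,hu251,hu212,hu222,hu232,hu242,hu252]
    ring
end
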